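/- Equality w(u + u') = w(u) + w(u') holds if and only if u and u' are co-facial, i.e., w(u)^{-1}u and w(u')^{-1}u' lie on a common closed codimension-1 face of Δ not containing the origin (assuming u, u' are nonzero points of C(Δ)). -/

import Mathlib

open scoped Pointwise

/-- The cone `C(Δ)` generated by `Δ`. -/
def cone {n : ℕ} (Δ : Set (Fin n → ℝ)) : Set (Fin n → ℝ) :=
  {u | ∃ c : ℝ, 0 ≤ c ∧ ∃ x ∈ Δ, u = c • x}

/-- The weight of `u`: the smallest `c ≥ 0` with `u ∈ c • Δ`. -/
noncomputable def weight {n : ℕ} (Δ : Set (Fin n → ℝ)) (u : Fin n → ℝ) : ℝ :=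
  sInf {c : ℝ | 0 ≤ c ∧ u ∈ c • Δ}

/-- `u` and `u'` are co-facial: the normalized points `w(u)⁻¹ • u` and `w(u')⁻¹ • u'`
lie on a common closed codimension-1 face of `Δ` not containing the origin, expressed by
a supporting linear functional `ℓ ≤ 1` on `Δ` attaining the value `1` at both points
(so the face `{x ∈ Δ | ℓ x = 1}` does not contain the origin). -/
def CoFacial {n : ℕ} (Δ : Set (Fin n → ℝ)) (u u' : Fin n → ℝ) : Prop :=
  ∃ ℓ : (Fin n → ℝ) →ₗ[ℝ] ℝ, (∀ x ∈ Δ, ℓ x ≤ 1) ∧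
    ℓ ((weight Δ u)⁻¹ • u) = 1 ∧ ℓ ((weight Δ u')⁻¹ • u') = 1

section Aux

variable {n : ℕ}

private lemma weight_le {Δ : Set (Fin n → ℝ)} {u : Fin n → ℝ} {c : ℝ}
    (hc : 0 ≤ c) (h : u ∈ c • Δ) : weight Δ u ≤ c :=
  csInf_le ⟨0, fun _ hx => hx.1⟩ ⟨hc, h⟩

private lemma le_weight {Δ : Set (Fin n → ℝ)} {u : Fin n → ℝ} {m : ℝ}
    (hne : {c : ℝ | 0 ≤ c ∧ u ∈ c • Δ}.Nonempty)
    (hm : ∀ c : ℝ, 0 ≤ c → u ∈ c • Δ → m ≤ c) : m ≤ weight Δ u :=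
  le_csInf hne (fun c hc => hm c hc.1 hc.2)

private lemma weight_zero {Δ : Set (Fin n → ℝ)} (hΔne : Δ.Nonempty) : weight Δ 0 = 0 := by
  obtain ⟨x, hx⟩ := hΔne
  have h0 : (0:ℝ) ∈ {c : ℝ | 0 ≤ c ∧ (0 : Fin n → ℝ) ∈ c • Δ} :=
    ⟨le_refl 0, ⟨x, hx, zero_smul ℝ x⟩⟩
  exact le_antisymm (csInf_le ⟨0, fun c hc => hc.1⟩ h0) (le_csInf ⟨0, h0⟩ fun c hc => hc.1)

private lemma norm_le_hull {S : Finset (Fin n → ℝ)} (hS : S.Nonempty) {x : Fin n → ℝ}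
    (hx : x ∈ convexHull ℝ (S : Set (Fin n → ℝ))) :
    ‖x‖ ≤ S.sup' hS (fun s => ‖s‖) := by
  have h : convexHull ℝ (S : Set (Fin n → ℝ))
      ⊆ Metric.closedBall 0 (S.sup' hS fun s => ‖s‖) := by
    apply convexHull_min _ (convex_closedBall _ _)
    intro s hs
    have := Finset.le_sup' (fun s => ‖s‖) hs
    simp only [Metric.mem_closedBall, dist_zero_right]
    exact this
  simpa [Metric.mem_closedBall, dist_zero_right] using h hx

private lemma weight_pos {S : Finset (Fin n → ℝ)} {u : Fin n → ℝ}
    (hu0 : u ≠ 0)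
    (hne : {c : ℝ | 0 ≤ c ∧ u ∈ c • convexHull ℝ (S : Set (Fin n → ℝ))}.Nonempty) :
    0 < weight (convexHull ℝ (S : Set (Fin n → ℝ))) u := by
  have hS : S.Nonempty := by
    obtain ⟨c, _, x, hx, _⟩ := hne
    rcases S.eq_empty_or_nonempty with rfl | h
    · simp at hx
    · exact h
  set R : ℝ := max (S.sup' hS fun s => ‖s‖) 1 with hR
  have hR0 : (0:ℝ) < R := lt_of_lt_of_le one_pos (le_max_right _ _)
  have hu : (0:ℝ) < ‖u‖ := norm_pos_iff.mpr hu0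
  refine lt_of_lt_of_le (show (0:ℝ) < ‖u‖ / R by positivity) (le_weight hne ?_)
  intro c hc hmem
  obtain ⟨x, hx, hxe⟩ := hmem
  have hxR : ‖x‖ ≤ R := le_trans (norm_le_hull hS hx) (le_max_left _ _)
  have : ‖u‖ ≤ c * R := by
    calc ‖u‖ = ‖c • x‖ := by rw [show c • x = u from hxe]
    _ = |c| * ‖x‖ := by rw [norm_smul, Real.norm_eq_abs]
    _ = c * ‖x‖ := by rw [abs_of_nonneg hc]
    _ ≤ c * R := mul_le_mul_of_nonneg_left hxR hc
  rw [div_le_iff₀ hR0]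
  linarith

private lemma mem_weight_smul {S : Finset (Fin n → ℝ)} {u : Fin n → ℝ}
    (hu0 : u ≠ 0)
    (hne : {c : ℝ | 0 ≤ c ∧ u ∈ c • convexHull ℝ (S : Set (Fin n → ℝ))}.Nonempty) :
    u ∈ weight (convexHull ℝ (S : Set (Fin n → ℝ))) u • convexHull ℝ (S : Set (Fin n → ℝ)) := by
  set Δ := convexHull ℝ (S : Set (Fin n → ℝ)) with hΔ
  have hw : 0 < weight Δ u := weight_pos hu0 hne
  obtain ⟨cs, -, htend, hmem⟩ :=
    exists_seq_tendsto_sInf hne ⟨0, fun c hc => hc.1⟩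
  have hk : ∀ k : ℕ, (cs k)⁻¹ • u ∈ Δ := by
    intro k
    obtain ⟨hk0, x, hx, hxe⟩ := hmem k
    have hpos : 0 < cs k := lt_of_lt_of_le hw (weight_le hk0 ⟨x, hx, hxe⟩)
    rw [← hxe, inv_smul_smul₀ hpos.ne']
    exact hx
  have hcl : IsClosed Δ := Set.Finite.isClosed_convexHull (𝕜 := ℝ) S.finite_toSet
  have htend2 : Filter.Tendsto (fun k => (cs k)⁻¹ • u) Filter.atTop
      (nhds ((weight Δ u)⁻¹ • u)) := by
    have : Filter.Tendsto (fun k => (cs k)⁻¹) Filter.atTop (nhds (weight Δ u)⁻¹) :=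
      (htend.inv₀ hw.ne')
    exact this.smul_const u
  have hmem2 : (weight Δ u)⁻¹ • u ∈ Δ :=
    hcl.mem_of_tendsto htend2 (Filter.Eventually.of_forall hk)
  exact ⟨_, hmem2, smul_inv_smul₀ hw.ne' u⟩

private lemma add_mem_smul_hull {Δ : Set (Fin n → ℝ)} (hΔ : Convex ℝ Δ) {a b : ℝ}
    {x y : Fin n → ℝ} (ha : 0 ≤ a) (hb : 0 ≤ b) (hx : x ∈ a • Δ) (hy : y ∈ b • Δ) :
    x + y ∈ (a + b) • Δ := by
  rw [hΔ.add_smul ha hb]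
  exact Set.add_mem_add hx hy

private lemma mem_hull_filter {S : Finset (Fin n → ℝ)} (f : (Fin n → ℝ) →L[ℝ] ℝ)
    (hf : ∀ s ∈ S, f s ≤ 0) {x : Fin n → ℝ}
    (hx : x ∈ convexHull ℝ (S : Set (Fin n → ℝ))) (hfx : f x = 0) :
    x ∈ convexHull ℝ ((S.filter (fun s => f s = (0:ℝ))) : Set (Fin n → ℝ)) := by
  classical
  rw [Finset.convexHull_eq] at hx
  obtain ⟨w, hw0, hw1, hwx⟩ := hx
  rw [Finset.centerMass_eq_of_sum_1 _ _ hw1] at hwx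
  simp only [id] at hwx
  have hsum : ∑ y ∈ S, w y * f y = 0 := by
    have h1 : f (∑ y ∈ S, w y • y) = ∑ y ∈ S, w y * f y := by
      rw [map_sum]
      exact Finset.sum_congr rfl fun y _ => by rw [map_smul, smul_eq_mul]
    rw [hwx, hfx] at h1
    exact h1.symm
  have hterm : ∀ y ∈ S, w y * f y = 0 := by
    refine (Finset.sum_eq_zero_iff_of_nonpos ?_).mp hsum
    intro y hy
    have h1 : 0 ≤ w y := hw0 y hy
    have h2 : f y ≤ 0 := hf y hy
    nlinarith
  have hzero : ∀ y ∈ S, ¬ (f y = (0:ℝ)) → w y = 0 := by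
    intro y hy hfy
    rcases mul_eq_zero.mp (hterm y hy) with h | h
    · exact h
    · exact absurd h hfy
  have hfsum : ∑ y ∈ S.filter (fun s => ¬ f s = (0:ℝ)), w y = 0 :=
    Finset.sum_eq_zero fun y hy =>
      hzero y (Finset.mem_filter.mp hy).1 (Finset.mem_filter.mp hy).2
  have hw1' : ∑ y ∈ S.filter (fun s => f s = (0:ℝ)), w y = 1 := by
    rw [← Finset.sum_filter_add_sum_filter_not S (fun s => f s = (0:ℝ)) w] at hw1
    rw [hfsum, add_zero] at hw1
    exact hw1
  rw [Finset.convexHull_eq]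
  refine ⟨w, fun y hy => hw0 y (Finset.mem_filter.mp hy).1, hw1', ?_⟩
  rw [Finset.centerMass_eq_of_sum_1 _ _ hw1']
  simp only [id]
  rw [← hwx, ← Finset.sum_filter_add_sum_filter_not S (fun s => f s = (0:ℝ)) (fun y => w y • y)]
  have : ∑ y ∈ S.filter (fun s => ¬ f s = (0:ℝ)), w y • y = 0 :=
    Finset.sum_eq_zero fun y hy => by
      rw [hzero y (Finset.mem_filter.mp hy).1 (Finset.mem_filter.mp hy).2, zero_smul]
  rw [this, add_zero]


set_option maxHeartbeats 1000000 in
private lemma key_step {n : ℕ} : ∀ (k : ℕ) (S : Finset (Fin n → ℝ)) (p : Fin n → ℝ),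
    S.card ≤ k →
    (0 : Fin n → ℝ) ∈ convexHull ℝ (S : Set (Fin n → ℝ)) →
    p ∈ convexHull ℝ (S : Set (Fin n → ℝ)) → p ≠ 0 →
    (∀ c : ℝ, 0 ≤ c → c < 1 → p ∉ c • convexHull ℝ (S : Set (Fin n → ℝ))) →
    ∃ ℓ : (Fin n → ℝ) →ₗ[ℝ] ℝ,
      (∀ x ∈ convexHull ℝ (S : Set (Fin n → ℝ)), ℓ x ≤ 1) ∧ ℓ p = 1 := by
  intro k
  induction k with
  | zero =>
    intro S p hcard h0 hp hp0 hw
    rw [Nat.le_zero, Finset.card_eq_zero] at hcard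
    subst hcard
    simp at h0
  | succ k IH =>
    intro S p hcard h0 hp hp0 hw
    classical
    set V : Submodule ℝ (Fin n → ℝ) := Submodule.span ℝ (S : Set (Fin n → ℝ)) with hV
    obtain ⟨W, hVW⟩ := Submodule.exists_isCompl V
    obtain ⟨T, hT⟩ : W.FG := IsNoetherian.noetherian W
    set D : Set (Fin n → ℝ) :=
      (insert 0 (T : Set (Fin n → ℝ))) ∪ (-(insert 0 (T : Set (Fin n → ℝ)))) with hD
    have hTW : (insert 0 (T : Set (Fin n → ℝ))) ⊆ (W : Set (Fin n → ℝ)) := by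
      intro x hx
      rcases hx with rfl | hx
      · exact W.zero_mem
      · rw [← hT]; exact Submodule.subset_span hx
    have hDW : D ⊆ (W : Set (Fin n → ℝ)) := by
      intro x hx
      rcases hx with hx | hx
      · exact hTW hx
      · have : -x ∈ insert 0 (T : Set (Fin n → ℝ)) := Set.mem_neg.mp hx
        simpa using W.neg_mem (hTW this)
    have hD0 : (0 : Fin n → ℝ) ∈ D := Or.inl (Set.mem_insert _ _)
    set Δt : Set (Fin n → ℝ) := convexHull ℝ ((S : Set (Fin n → ℝ)) ∪ D) with hΔt
    have hSne : S.Nonempty := by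
      rcases S.eq_empty_or_nonempty with rfl | h
      · simp at h0
      · exact h
    have hSne' : (S : Set (Fin n → ℝ)).Nonempty := by exact_mod_cast hSne
    have hsub : convexHull ℝ (S : Set (Fin n → ℝ)) ⊆ Δt :=
      convexHull_mono Set.subset_union_left
    have h0t : (0 : Fin n → ℝ) ∈ Δt := hsub h0
    have hpV : p ∈ V := by
      have : convexHull ℝ (S : Set (Fin n → ℝ)) ⊆ (V : Set (Fin n → ℝ)) :=
        convexHull_min Submodule.subset_span V.convex
      exact this hp
    -- intersection with V is the original hull
    have hcap : ∀ x ∈ Δt, x ∈ V → x ∈ convexHull ℝ (S : Set (Fin n → ℝ)) := by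
      intro x hx hxV
      rw [hΔt, convexHull_union hSne' ⟨0, hD0⟩, mem_convexJoin] at hx
      obtain ⟨a, ha, b, hb, hseg⟩ := hx
      obtain ⟨ua, ub, hua, hub, huv, hxe⟩ := hseg
      have haV : a ∈ V := by
        have : convexHull ℝ (S : Set (Fin n → ℝ)) ⊆ (V : Set (Fin n → ℝ)) :=
          convexHull_min Submodule.subset_span V.convex
        exact this ha
      have hbW : b ∈ W := by
        have : convexHull ℝ D ⊆ (W : Set (Fin n → ℝ)) := convexHull_min hDW W.convex
        exact this hb
      have h1 : ub • b ∈ V := by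
        have : ub • b = x - ua • a := by rw [← hxe]; abel
        rw [this]
        exact V.sub_mem hxV (V.smul_mem _ haV)
      have h2 : ub • b ∈ W := W.smul_mem _ hbW
      have hzb : ub • b = 0 := Submodule.disjoint_def.mp hVW.disjoint _ h1 h2
      have hxa : x = ua • a + ub • (0 : Fin n → ℝ) := by
        rw [smul_zero, ← hxe, hzb, add_zero]
      rw [hxa]
      exact (convex_convexHull ℝ _) ha h0 hua hub huv
    -- full-dimensionality of the fattened hull
    have hspan : Submodule.span ℝ ((S : Set (Fin n → ℝ)) ∪ D) = ⊤ := by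
      rw [eq_top_iff, ← hVW.sup_eq_top]
      apply sup_le
      · rw [hV]
        exact Submodule.span_mono Set.subset_union_left
      · rw [← hT]
        apply Submodule.span_le.mpr
        intro t ht
        exact Submodule.subset_span
          (Set.mem_union_right _ (Set.mem_union_left _ (Set.mem_insert_of_mem _ ht)))
    have haff : affineSpan ℝ Δt = ⊤ := by
      rw [← AffineSubspace.coe_eq_univ_iff]
      rw [hΔt, affineSpan_convexHull]
      have hins : insert (0 : Fin n → ℝ) ((S : Set (Fin n → ℝ)) ∪ D)
          = (S : Set (Fin n → ℝ)) ∪ D := Set.insert_eq_self.mpr (Or.inr hD0)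
      rw [← hins, affineSpan_insert_zero, hspan]
      rfl
    have hint : (interior Δt).Nonempty :=
      ((convex_convexHull ℝ _).interior_nonempty_iff_affineSpan_eq_top).mpr haff
    -- p is not an interior point of the fattened hull
    have hpi : p ∉ interior Δt := by
      intro hpin
      obtain ⟨ε, hε, hball⟩ := Metric.isOpen_iff.mp isOpen_interior p hpin
      set t : ℝ := 1 + ε / (2 * (‖p‖ + 1)) with htdef
      have hp1 : (0:ℝ) < ‖p‖ + 1 := by positivity
      have ht1 : (1:ℝ) < t := by
        rw [htdef]
        have : (0:ℝ) < ε / (2 * (‖p‖ + 1)) := by positivity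
        linarith
      have ht0 : (0:ℝ) < t := by linarith
      have htp : t • p ∈ Metric.ball p ε := by
        rw [Metric.mem_ball, dist_eq_norm]
        have : t • p - p = (t - 1) • p := by
          rw [sub_smul, one_smul]
        rw [this, norm_smul, Real.norm_eq_abs, abs_of_nonneg (by linarith : (0:ℝ) ≤ t - 1)]
        have h1 : t - 1 = ε / (2 * (‖p‖ + 1)) := by rw [htdef]; ring
        rw [h1, div_mul_eq_mul_div, div_lt_iff₀ (by positivity)]
        nlinarith [norm_nonneg p]
      have h1 : t • p ∈ Δt := interior_subset (hball htp)
      have h2 : t • p ∈ V := V.smul_mem _ hpV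
      have h3 : t • p ∈ convexHull ℝ (S : Set (Fin n → ℝ)) := hcap _ h1 h2
      refine hw t⁻¹ (by positivity) (inv_lt_one_of_one_lt₀ ht1) ?_
      refine ⟨t • p, h3, ?_⟩
      show t⁻¹ • t • p = p
      exact inv_smul_smul₀ ht0.ne' p
    -- separating functional
    obtain ⟨f, hf⟩ := geometric_hahn_banach_open_point
      (convex_convexHull ℝ _).interior isOpen_interior hpi
    have hfle : ∀ x ∈ Δt, f x ≤ f p := by
      intro x hx
      obtain ⟨x₀, hx₀⟩ := hint
      have hseq : ∀ m : ℕ, f ((1/(m+2):ℝ) • x₀ + ((1:ℝ) - 1/(m+2:ℝ)) • x) < f p := by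
        intro m
        have hm2 : (0:ℝ) < 1/(m+2 : ℝ) := by positivity
        have hm2' : (1/(m+2):ℝ) ≤ 1 := by
          rw [div_le_one (by positivity)]
          have : (0:ℝ) ≤ (m:ℝ) := Nat.cast_nonneg m
          linarith
        have hmem := (convex_convexHull ℝ _).combo_interior_self_mem_interior
          (a := (1/(m+2:ℝ))) (b := 1 - 1/(m+2:ℝ)) hx₀ hx hm2 (by linarith) (by ring)
        exact hf _ hmem
      have hlim : Filter.Tendsto
          (fun m : ℕ => f ((1/(m+2):ℝ) • x₀ + ((1:ℝ) - 1/(m+2:ℝ)) • x))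
          Filter.atTop (nhds (f x)) := by
        have h1 : Filter.Tendsto (fun m : ℕ => (1/(m+2):ℝ)) Filter.atTop (nhds 0) := by
          have hbase : Filter.Tendsto (fun x : ℝ => 1 / (x + 2)) Filter.atTop (nhds 0) :=
            Filter.Tendsto.div_atTop tendsto_const_nhds
              (Filter.tendsto_atTop_add_const_right _ 2 Filter.tendsto_id)
          have h2 := hbase.comp tendsto_natCast_atTop_atTop
          exact h2
        have h2 : Filter.Tendsto
            (fun m : ℕ => (1/(m+2):ℝ) • x₀ + ((1:ℝ) - 1/(m+2:ℝ)) • x)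
            Filter.atTop (nhds ((0:ℝ) • x₀ + ((1:ℝ) - 0) • x)) :=
          (h1.smul_const x₀).add
            (((tendsto_const_nhds (x := (1:ℝ))).sub h1).smul_const x)
        have h3 := (f.continuous.tendsto ((0:ℝ) • x₀ + ((1:ℝ) - 0) • x)).comp h2
        simp only [Function.comp_def] at h3
        simpa using h3
      exact le_of_tendsto hlim (Filter.Eventually.of_forall fun m => (hseq m).le)
    have hc0 : 0 ≤ f p := by
      have := hfle 0 h0t
      simpa using this
    rcases eq_or_lt_of_le hc0 with hc | hc
    · -- the supporting value is 0 : recurse into the face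
      have hfneg : ∀ x ∈ Δt, f x ≤ 0 := fun x hx => (hfle x hx).trans (le_of_eq hc.symm)
      have hfS : ∀ s ∈ S, f s ≤ 0 := fun s hs =>
        hfneg s (hsub (subset_convexHull ℝ _ hs))
      have hs₀ : ∃ s ∈ S, f s < 0 := by
        by_contra hno
        push_neg at hno
        have hSker : ∀ s ∈ S, f s = 0 := fun s hs =>
          le_antisymm (hfS s hs) (hno s hs)
        have hVker : V ≤ LinearMap.ker (f : (Fin n → ℝ) →ₗ[ℝ] ℝ) := by
          rw [hV]
          apply Submodule.span_le.mpr
          intro s hs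
          exact LinearMap.mem_ker.mpr (hSker s hs)
        have hWker : W ≤ LinearMap.ker (f : (Fin n → ℝ) →ₗ[ℝ] ℝ) := by
          rw [← hT]
          apply Submodule.span_le.mpr
          intro t ht
          have h1 : (t : Fin n → ℝ) ∈ Δt :=
            subset_convexHull ℝ _
              (Set.mem_union_right _ (Set.mem_union_left _ (Set.mem_insert_of_mem _ ht)))
          have h2 : -(t : Fin n → ℝ) ∈ Δt := by
            apply subset_convexHull ℝ ((S : Set (Fin n → ℝ)) ∪ D)
            refine Set.mem_union_right _ (Set.mem_union_right _ ?_)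
            rw [Set.mem_neg, neg_neg]
            exact Set.mem_insert_of_mem _ ht
          have h3 := hfneg _ h1
          have h4 := hfneg _ h2
          rw [map_neg] at h4
          exact LinearMap.mem_ker.mpr (le_antisymm h3 (show (0:ℝ) ≤ f t by linarith))
        have hker : ∀ x : Fin n → ℝ, f x = 0 := by
          intro x
          have : x ∈ V ⊔ W := by rw [hVW.sup_eq_top]; trivial
          have := sup_le hVker hWker this
          exact LinearMap.mem_ker.mp this
        obtain ⟨x₀, hx₀⟩ := hint
        have := hf x₀ hx₀
        rw [hker x₀, hker p] at this
        exact lt_irrefl 0 this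
      obtain ⟨s₀, hs₀S, hs₀f⟩ := hs₀
      set S' : Finset (Fin n → ℝ) := S.filter (fun s => f s = (0:ℝ)) with hS'
      have hS'card : S'.card < S.card := by
        apply Finset.card_lt_card
        rw [Finset.ssubset_iff_of_subset (Finset.filter_subset _ _)]
        exact ⟨s₀, hs₀S, by simp [hS', hs₀f.ne]⟩
      have h0' : (0 : Fin n → ℝ) ∈ convexHull ℝ (S' : Set (Fin n → ℝ)) :=
        mem_hull_filter f hfS h0 (map_zero f)
      have hp' : p ∈ convexHull ℝ (S' : Set (Fin n → ℝ)) :=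
        mem_hull_filter f hfS hp hc.symm
      have hw' : ∀ c : ℝ, 0 ≤ c → c < 1 → p ∉ c • convexHull ℝ (S' : Set (Fin n → ℝ)) := by
        intro c h1 h2 hmem
        refine hw c h1 h2 (Set.smul_set_mono (convexHull_mono ?_) hmem)
        exact_mod_cast Finset.filter_subset _ _
      obtain ⟨ℓ₁, hℓ₁, hℓ₁p⟩ := IH S' p (by omega) h0' hp' hp0 hw'
      set g : (Fin n → ℝ) → ℝ :=
        fun s => if f s < 0 then max 0 ((ℓ₁ s - 1) / (-f s)) else 0 with hg
      set M : ℝ := S.sup' hSne g with hM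
      refine ⟨ℓ₁ + M • (f : (Fin n → ℝ) →ₗ[ℝ] ℝ), ?_, ?_⟩
      · apply convexHull_min ?_ (convex_halfSpace_le
          (LinearMap.isLinear (ℓ₁ + M • (f : (Fin n → ℝ) →ₗ[ℝ] ℝ))) 1)
        intro s hs
        show ℓ₁ s + M * f s ≤ 1
        rcases lt_or_eq_of_le (hfS s hs) with hneg | hzero
        · have hgs : (ℓ₁ s - 1) / (-f s) ≤ g s := by
            rw [hg]
            simp only [if_pos hneg]
            exact le_max_right _ _
          have hMs : g s ≤ M := Finset.le_sup' g hs
          have h1 : (ℓ₁ s - 1) / (-f s) ≤ M := le_trans hgs hMs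
          rw [div_le_iff₀ (by linarith : (0:ℝ) < -f s)] at h1
          nlinarith
        · have hsS' : s ∈ S' := Finset.mem_filter.mpr ⟨hs, hzero⟩
          have h1 : ℓ₁ s ≤ 1 := hℓ₁ s (subset_convexHull ℝ _ hsS')
          rw [hzero]
          linarith
      · show ℓ₁ p + M * f p = 1
        rw [← hc, hℓ₁p]
        ring
    · -- positive supporting value : normalize
      refine ⟨(f p)⁻¹ • (f : (Fin n → ℝ) →ₗ[ℝ] ℝ), ?_, ?_⟩
      · intro x hx
        show (f p)⁻¹ * f x ≤ 1
        have h1 : f x ≤ f p := hfle x (hsub hx)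
        rw [← inv_mul_cancel₀ hc.ne']
        exact mul_le_mul_of_nonneg_left h1 (by positivity)
      · show (f p)⁻¹ * f p = 1
        exact inv_mul_cancel₀ hc.ne'

end Aux

/-- Equality `w(u + u') = w(u) + w(u')` holds if and only if `u` and `u'` are co-facial. -/
theorem weight_add_eq_iff_coFacial {n : ℕ} (S : Finset (Fin n → ℝ))
    (Δ : Set (Fin n → ℝ)) (hΔ : Δ = convexHull ℝ (S : Set (Fin n → ℝ)))
    (hdim : affineSpan ℝ Δ = ⊤) (h0 : (0 : Fin n → ℝ) ∈ Δ)
    (u u' : Fin n → ℝ) (hu : u ∈ cone Δ) (hu' : u' ∈ cone Δ)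
    (hu0 : u ≠ 0) (hu'0 : u' ≠ 0) :
    weight Δ (u + u') = weight Δ u + weight Δ u' ↔ CoFacial Δ u u' := by
  have hconv : Convex ℝ Δ := hΔ ▸ convex_convexHull ℝ (S : Set (Fin n → ℝ))
  have hΔne : Δ.Nonempty := ⟨0, h0⟩
  have hTu : {c : ℝ | 0 ≤ c ∧ u ∈ c • Δ}.Nonempty := by
    obtain ⟨c, hc, x, hx, rfl⟩ := hu
    exact ⟨c, hc, ⟨x, hx, rfl⟩⟩
  have hTu' : {c : ℝ | 0 ≤ c ∧ u' ∈ c • Δ}.Nonempty := by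
    obtain ⟨c, hc, x, hx, rfl⟩ := hu'
    exact ⟨c, hc, ⟨x, hx, rfl⟩⟩
  subst hΔ
  have ha : 0 < weight (convexHull ℝ (S : Set (Fin n → ℝ))) u := weight_pos hu0 hTu
  have hb : 0 < weight (convexHull ℝ (S : Set (Fin n → ℝ))) u' := weight_pos hu'0 hTu'
  set Δ := convexHull ℝ (S : Set (Fin n → ℝ)) with hΔdef
  have hua : u ∈ weight Δ u • Δ := mem_weight_smul hu0 hTu
  have hub : u' ∈ weight Δ u' • Δ := mem_weight_smul hu'0 hTu'
  have hsum_mem : u + u' ∈ (weight Δ u + weight Δ u') • Δ :=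
    add_mem_smul_hull hconv ha.le hb.le hua hub
  have hTuu : {c : ℝ | 0 ≤ c ∧ u + u' ∈ c • Δ}.Nonempty :=
    ⟨weight Δ u + weight Δ u', by positivity, hsum_mem⟩
  constructor
  · -- equality implies co-facial
    intro heq
    have huu0 : u + u' ≠ 0 := by
      intro h
      have hz := weight_zero (Δ := Δ) hΔne
      rw [h, hz] at heq
      linarith
    have hw0 : 0 < weight Δ (u + u') := by rw [heq]; positivity
    have hmemw : u + u' ∈ weight Δ (u + u') • Δ := mem_weight_smul huu0 hTuu
    obtain ⟨q, hq, hqe⟩ := hmemw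
    have hqe' : weight Δ (u + u') • q = u + u' := hqe
    have hq0 : q ≠ 0 := by
      intro h
      rw [h, smul_zero] at hqe'
      exact huu0 hqe'.symm
    have hqw : ∀ c : ℝ, 0 ≤ c → c < 1 → q ∉ c • Δ := by
      intro c hc hc1 hmem
      obtain ⟨x, hx, hxe⟩ := hmem
      have hxe' : c • x = q := hxe
      have hmem2 : u + u' ∈ (weight Δ (u + u') * c) • Δ := by
        refine ⟨x, hx, ?_⟩
        show (weight Δ (u + u') * c) • x = u + u'
        rw [mul_smul, hxe', hqe']
      have h2 : weight Δ (u + u') ≤ weight Δ (u + u') * c := weight_le (by positivity) hmem2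
      nlinarith
    obtain ⟨ℓ, hℓ, hℓq⟩ := key_step S.card S q le_rfl h0 hq hq0 hqw
    have hℓuu : ℓ (u + u') = weight Δ (u + u') := by
      have h3 := congrArg ℓ hqe'
      rw [map_smul, smul_eq_mul, hℓq, mul_one] at h3
      exact h3.symm
    have hAx : (weight Δ u)⁻¹ • u ∈ Δ := by
      obtain ⟨x, hx, hxe⟩ := hua
      have hxe' : weight Δ u • x = u := hxe
      have h4 : (weight Δ u)⁻¹ • (weight Δ u • x) = (weight Δ u)⁻¹ • u :=
        congrArg _ hxe'
      rw [inv_smul_smul₀ ha.ne'] at h4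
      rw [← h4]
      exact hx
    have hBx : (weight Δ u')⁻¹ • u' ∈ Δ := by
      obtain ⟨x, hx, hxe⟩ := hub
      have hxe' : weight Δ u' • x = u' := hxe
      have h4 : (weight Δ u')⁻¹ • (weight Δ u' • x) = (weight Δ u')⁻¹ • u' :=
        congrArg _ hxe'
      rw [inv_smul_smul₀ hb.ne'] at h4
      rw [← h4]
      exact hx
    have htA : ℓ ((weight Δ u)⁻¹ • u) ≤ 1 := hℓ _ hAx
    have htB : ℓ ((weight Δ u')⁻¹ • u') ≤ 1 := hℓ _ hBx
    have he1 : weight Δ u * ℓ ((weight Δ u)⁻¹ • u) = ℓ u := by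
      rw [map_smul, smul_eq_mul]
      field_simp
    have he2 : weight Δ u' * ℓ ((weight Δ u')⁻¹ • u') = ℓ u' := by
      rw [map_smul, smul_eq_mul]
      field_simp
    have hkey : weight Δ u * ℓ ((weight Δ u)⁻¹ • u)
        + weight Δ u' * ℓ ((weight Δ u')⁻¹ • u')
        = weight Δ u + weight Δ u' := by
      rw [he1, he2, ← map_add, hℓuu, heq]
    have h1 : weight Δ u * 1 ≤ weight Δ u * ℓ ((weight Δ u)⁻¹ • u) := by
      have := mul_le_mul_of_nonneg_left htB hb.le
      linarith
    have h2 : weight Δ u' * 1 ≤ weight Δ u' * ℓ ((weight Δ u')⁻¹ • u') := by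
      have := mul_le_mul_of_nonneg_left htA ha.le
      linarith
    exact ⟨ℓ, hℓ, le_antisymm htA (le_of_mul_le_mul_left h1 ha),
      le_antisymm htB (le_of_mul_le_mul_left h2 hb)⟩
  · -- co-facial implies equality
    rintro ⟨ℓ, hℓ, hℓu, hℓu'⟩
    have hℓua : ℓ u = weight Δ u := by
      rw [map_smul, smul_eq_mul] at hℓu
      field_simp at hℓu
      linarith [hℓu]
    have hℓub : ℓ u' = weight Δ u' := by
      rw [map_smul, smul_eq_mul] at hℓu'
      field_simp at hℓu'
      linarith [hℓu']
    apply le_antisymm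
    · exact weight_le (by positivity) hsum_mem
    · refine le_weight hTuu ?_
      intro c hc hmem
      obtain ⟨x, hx, hxe⟩ := hmem
      have hxe' : c • x = u + u' := hxe
      have h1 : ℓ x ≤ 1 := hℓ x hx
      have h2 : ℓ (u + u') = c * ℓ x := by
        rw [← hxe', map_smul, smul_eq_mul]
      rw [map_add, hℓua, hℓub] at h2
      nlinarith
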